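/- Kruskal's theorem for labelled trees implies Higman's theorem for ordered algebras: if (A, M, ≤) is an ordered algebra where (M, ⊲) is a wqo of operations, ≤ is a divisibility order compatible with ⊲, and A is generated by a wqo subset C, then (A, ≤) is a wqo. The proof constructs the set of graded trees over C ∪ M (trees where each node's number of children equals the arity/grade of its label), defines an evaluation map φ from graded trees to A, and shows φ is an order-preserving surjection. -/

import Mathlib

universe u

/-- Finite ordered trees with labels in `Q`. -/
inductive LTree (Q : Type u) : Type u
  | node : Q → List (LTree Q) → LTree Q

mutual
  /-- Tree embeddability: `Emb r t s` iff `t` embeds into a subtree of `s`, or the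
  roots compare via `r` and the lists of immediate subtrees compare in Higman's
  order induced by embeddability. -/
  inductive Emb {Q : Type u} (r : Q → Q → Prop) : LTree Q → LTree Q → Prop
    | subtree {t s : LTree Q} {q : Q} {ss : List (LTree Q)} :
        Emb r t s → s ∈ ss → Emb r t (.node q ss)
    | node {p q : Q} {ts ss : List (LTree Q)} :
        r p q → ListEmb r ts ss → Emb r (.node p ts) (.node q ss)

  /-- Higman's embedding between lists of trees, with `Emb r` on the elements. -/
  inductive ListEmb {Q : Type u} (r : Q → Q → Prop) : List (LTree Q) → List (LTree Q) → Prop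
    | nil : ListEmb r [] []
    | cons {t s : LTree Q} {ts ss : List (LTree Q)} :
        Emb r t s → ListEmb r ts ss → ListEmb r (t :: ts) (s :: ss)
    | skip {s : LTree Q} {ts ss : List (LTree Q)} :
        ListEmb r ts ss → ListEmb r ts (s :: ss)
end

def IsWqo {α : Type*} (r : α → α → Prop) : Prop :=
  ∀ f : ℕ → α, ∃ i j : ℕ, i < j ∧ r (f i) (f j)

/-- Higman's embedding order on finite sequences. -/
def HigmanLE {α : Type*} (r : α → α → Prop) (l₁ l₂ : List α) : Prop :=
  ∃ l' : List α, l'.Sublist l₂ ∧ List.Forall₂ r l₁ l'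

section Aux
variable {C M A : Type}

def kgrade (arity : M → ℕ) : C ⊕ M → ℕ
  | .inl _ => 0
  | .inr m => arity m

def krQ (le : A → A → Prop) (ι : C → A) (tri : M → M → Prop) : C ⊕ M → C ⊕ M → Prop
  | .inl c, .inl c' => le (ι c) (ι c')
  | .inr m, .inr m' => tri m m'
  | _, _ => False

inductive Graded (arity : M → ℕ) : LTree (C ⊕ M) → Prop
  | node (q : C ⊕ M) (ts : List (LTree (C ⊕ M))) :
      ts.length = kgrade arity q → (∀ t ∈ ts, Graded arity t) →
      Graded arity (.node q ts)

variable (ι : C → A) (arity : M → ℕ) (app : ∀ μ : M, (Fin (arity μ) → A) → A) (a0 : A)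

def keval : LTree (C ⊕ M) → A
  | .node (.inl c) _ => ι c
  | .node (.inr m) ts =>
      app m (fun i => if h : (i : ℕ) < ts.length then keval ts[i] else a0)
decreasing_by
  · have := List.sizeOf_lt_of_mem (ts.getElem_mem h)
    simp_wf
    omega

theorem keval_inr (m : M) (ts : List (LTree (C ⊕ M))) (hl : ts.length = arity m) :
    keval ι arity app a0 (.node (.inr m) ts) =
      app m (fun i => keval ι arity app a0 (ts[(i : ℕ)]'(by omega))) := by
  rw [keval]
  congr 1
  funext i
  rw [dif_pos (by omega)]
  rfl

theorem map_keval_inr (m : M) (ts : List (LTree (C ⊕ M))) (hl : ts.length = arity m) :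
    ts.map (keval ι arity app a0) =
      List.ofFn (fun i : Fin (arity m) => keval ι arity app a0 (ts[(i : ℕ)]'(by omega))) := by
  apply List.ext_getElem
  · simp [hl]
  · intro n h1 h2
    simp


mutual
theorem emb_le (le : A → A → Prop) (tri : M → M → Prop)
    (htrans : Transitive le)
    (hdiv : ∀ (μ : M) (a : Fin (arity μ) → A) (i : Fin (arity μ)), le (a i) (app μ a))
    (hcompat : ∀ (lam mu : M) (a : Fin (arity lam) → A) (b : Fin (arity mu) → A),
      tri lam mu → HigmanLE le (List.ofFn a) (List.ofFn b) → le (app lam a) (app mu b))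
    {t s : LTree (C ⊕ M)} (h : Emb (krQ le ι tri) t s)
    (ht : Graded arity t) (hs : Graded arity s) :
    le (keval ι arity app a0 t) (keval ι arity app a0 s) := by
  cases h with
  | @subtree t s q ss h hmem =>
    cases hs with
    | node _ _ hlen hall =>
      have hs' := hall s hmem
      have ih := emb_le le tri htrans hdiv hcompat h ht hs'
      cases q with
      | inl c =>
        exfalso
        simp [kgrade] at hlen
        subst hlen
        exact (List.not_mem_nil hmem)
      | inr m =>
        simp only [kgrade] at hlen
        obtain ⟨k, hk, rfl⟩ := List.getElem_of_mem hmem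
        refine htrans ih ?_
        rw [keval_inr ι arity app a0 m ss hlen]
        exact hdiv m (fun i => keval ι arity app a0 (ss[(i:ℕ)]'(by omega))) ⟨k, by omega⟩
  | @node p q ts ss hr hlist =>
    cases p with
    | inl c =>
      cases q with
      | inl c' =>
        simpa [keval, krQ] using hr
      | inr m => exact absurd hr (by simp [krQ])
    | inr m =>
      cases q with
      | inl c' => exact absurd hr (by simp [krQ])
      | inr m' =>
        cases ht with
        | node _ _ hlt hallt =>
        cases hs with
        | node _ _ hls halls =>
          simp only [kgrade] at hlt hls
          have hh := listEmb_higman le tri htrans hdiv hcompat hlist hallt halls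
          rw [keval_inr ι arity app a0 m ts hlt, keval_inr ι arity app a0 m' ss hls]
          apply hcompat _ _ _ _ hr
          rw [← map_keval_inr ι arity app a0 m ts hlt, ← map_keval_inr ι arity app a0 m' ss hls]
          exact hh
termination_by (sizeOf t, sizeOf s)
decreasing_by
  all_goals simp_wf
  all_goals try subst_vars
  all_goals first
    | apply Prod.Lex.right
    | apply Prod.Lex.left
  all_goals try have h1 := List.sizeOf_lt_of_mem hmem
  all_goals simp
  all_goals omega

theorem listEmb_higman (le : A → A → Prop) (tri : M → M → Prop)
    (htrans : Transitive le)
    (hdiv : ∀ (μ : M) (a : Fin (arity μ) → A) (i : Fin (arity μ)), le (a i) (app μ a))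
    (hcompat : ∀ (lam mu : M) (a : Fin (arity lam) → A) (b : Fin (arity mu) → A),
      tri lam mu → HigmanLE le (List.ofFn a) (List.ofFn b) → le (app lam a) (app mu b))
    {ts ss : List (LTree (C ⊕ M))} (h : ListEmb (krQ le ι tri) ts ss)
    (ht : ∀ t ∈ ts, Graded arity t) (hs : ∀ s ∈ ss, Graded arity s) :
    HigmanLE le (ts.map (keval ι arity app a0)) (ss.map (keval ι arity app a0)) := by
  cases h with
  | nil => exact ⟨[], List.Sublist.refl _, List.Forall₂.nil⟩
  | @cons t s ts' ss' h hl =>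
    obtain ⟨l', hsub, hf⟩ := listEmb_higman le tri htrans hdiv hcompat hl
      (fun x hx => ht x (by simp [hx])) (fun x hx => hs x (by simp [hx]))
    refine ⟨keval ι arity app a0 s :: l', ?_, ?_⟩
    · simp only [List.map_cons]; exact hsub.cons₂ _
    · exact List.Forall₂.cons
        (emb_le le tri htrans hdiv hcompat h (ht t (by simp)) (hs s (by simp))) hf
  | @skip s ts' ss' hl =>
    obtain ⟨l', hsub, hf⟩ := listEmb_higman le tri htrans hdiv hcompat hl ht
      (fun x hx => hs x (by simp [hx]))
    exact ⟨l', hsub.trans (List.sublist_cons_self _ _), hf⟩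
termination_by (sizeOf ts, sizeOf ss)
decreasing_by
  all_goals simp_wf
  all_goals try subst_vars
  all_goals first
    | apply Prod.Lex.right
    | apply Prod.Lex.left
  all_goals try have h1 := List.sizeOf_lt_of_mem hmem
  all_goals simp
  all_goals omega
end

theorem krQ_wqo (le : A → A → Prop) (ι : C → A) (tri : M → M → Prop)
    (hC : IsWqo (fun c c' : C => le (ι c) (ι c'))) (hM : IsWqo tri) :
    IsWqo (krQ (C := C) (M := M) le ι tri) := by
  intro f
  by_cases hinf : {n | (f n).isLeft = true}.Infinite
  · set p : ℕ → Prop := fun n => (f n).isLeft = true with hp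
    have hmem : ∀ k, p (Nat.nth p k) := fun k => Nat.nth_mem_of_infinite hinf k
    have hcex : ∀ k, ∃ c, f (Nat.nth p k) = .inl c := fun k => Sum.isLeft_iff.mp (hmem k)
    choose c hc using hcex
    obtain ⟨i, j, hij, hle⟩ := hC c
    refine ⟨Nat.nth p i, Nat.nth p j, (Nat.nth_lt_nth hinf).mpr hij, ?_⟩
    rw [hc i, hc j]
    exact hle
  · have hright : {n | (f n).isRight = true}.Infinite := by
      have h1 : {n | (f n).isLeft = true}ᶜ.Infinite :=
        (Set.not_infinite.mp hinf).infinite_compl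
      convert h1 using 1
      ext n
      simp [Sum.not_isLeft]
    set p : ℕ → Prop := fun n => (f n).isRight = true with hp
    have hmem : ∀ k, p (Nat.nth p k) := fun k => Nat.nth_mem_of_infinite hright k
    have hcex : ∀ k, ∃ m, f (Nat.nth p k) = .inr m := fun k => Sum.isRight_iff.mp (hmem k)
    choose c hc using hcex
    obtain ⟨i, j, hij, hle⟩ := hM c
    refine ⟨Nat.nth p i, Nat.nth p j, (Nat.nth_lt_nth hright).mpr hij, ?_⟩
    rw [hc i, hc j]
    exact hle

end Aux

/-- Kruskal's theorem for labelled trees implies Higman's theorem for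
ordered algebras: if (A, M, ≤) is an ordered algebra, (M, ⊲) a wqo of operations,
≤ a divisibility order compatible with ⊲, and A is generated by a wqo subset C,
then (A, ≤) is a wqo. -/
theorem kruskal_implies_higman
    (KT : ∀ (Q : Type) (rQ : Q → Q → Prop), Reflexive rQ → Transitive rQ →
      IsWqo rQ → IsWqo (Emb rQ))
    -- the carrier, quasi-ordered
    (A : Type) (le : A → A → Prop) (hrefl : Reflexive le) (htrans : Transitive le)
    -- the operations, with their arities, quasi-ordered by ⊲, a wqo
    (M : Type) (arity : M → ℕ) (app : ∀ μ : M, (Fin (arity μ) → A) → A)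
    (tri : M → M → Prop) (htrirefl : Reflexive tri) (htritrans : Transitive tri)
    (hMwqo : IsWqo tri)
    -- (A, M, ≤) is an ordered algebra: every operation is monotone
    (hordered : ∀ (μ : M) (a b : Fin (arity μ) → A),
      (∀ i, le (a i) (b i)) → le (app μ a) (app μ b))
    -- ≤ is a divisibility order: each argument is below the value
    (hdiv : ∀ (μ : M) (a : Fin (arity μ) → A) (i : Fin (arity μ)), le (a i) (app μ a))
    -- ≤ is compatible with ⊲
    (hcompat : ∀ (lam mu : M) (a : Fin (arity lam) → A) (b : Fin (arity mu) → A),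
      tri lam mu → HigmanLE le (List.ofFn a) (List.ofFn b) → le (app lam a) (app mu b))
    -- C is a generating subset of A which is a wqo under ≤
    (C : Type) (ι : C → A) (hCwqo : IsWqo (fun c c' : C => le (ι c) (ι c')))
    (hgen : ∀ B : Set A, (∀ c : C, ι c ∈ B) →
      (∀ (μ : M) (a : Fin (arity μ) → A), (∀ i, a i ∈ B) → app μ a ∈ B) →
      ∀ x : A, x ∈ B) :
    IsWqo le := by
  intro f
  set a0 := f 0 with ha0
  have hrq_refl : Reflexive (krQ (C := C) (M := M) le ι tri) := by
    rintro (c | m)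
    · exact hrefl (ι c)
    · exact htrirefl m
  have hrq_trans : Transitive (krQ (C := C) (M := M) le ι tri) := by
    rintro (a | a) (b | b) (c | c) h1 h2 <;>
      first
      | exact h1.elim
      | exact h2.elim
      | exact htrans h1 h2
      | exact htritrans h1 h2
  have hKT := KT (C ⊕ M) (krQ le ι tri) hrq_refl hrq_trans
    (krQ_wqo le ι tri hCwqo hMwqo)
  have hsurj : ∀ x : A, ∃ t, Graded arity t ∧ keval ι arity app a0 t = x := by
    intro x
    refine hgen {x | ∃ t, Graded arity t ∧ keval ι arity app a0 t = x} ?_ ?_ x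
    · intro c
      exact ⟨.node (.inl c) [], Graded.node _ _ (by simp [kgrade]) (by simp), by rw [keval]⟩
    · intro μ a ha
      choose t hgr hev using ha
      refine ⟨.node (.inr μ) (List.ofFn t),
        Graded.node _ _ (by simp [kgrade]) ?_, ?_⟩
      · intro s hs
        obtain ⟨i, rfl⟩ := List.mem_ofFn.mp hs
        exact hgr i
      · rw [keval_inr ι arity app a0 μ _ (by simp)]
        congr 1
        funext i
        simp only [List.getElem_ofFn]
        exact hev i
  choose g hg hge using fun n => hsurj (f n)
  obtain ⟨i, j, hij, hemb⟩ := hKT g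
  refine ⟨i, j, hij, ?_⟩
  rw [← hge i, ← hge j]
  exact emb_le ι arity app a0 le tri htrans hdiv hcompat hemb (hg i) (hg j)
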